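/- In the n-BTS conservative spectrum allocation problem (P1), if the problem is feasible, then there exists an optimal allocation x* whose number of active reuse patterns is at most n, i.e., |{B ⊆ N : x*_B > 0}| ≤ n. -/

import Mathlib

open Finset

/-- Service rate of BTS `i` under allocation `x`: `r_i(x) = Σ_{B ⊆ N} s_{i,B} x_B`. -/
noncomputable def serviceRate {n : ℕ} (s : Fin n → Finset (Fin n) → ℝ)
    (x : Finset (Fin n) → ℝ) (i : Fin n) : ℝ :=
  ∑ B : Finset (Fin n), s i B * x B

/-- A spectrum allocation: nonnegative and summing to 1 over all reuse patterns. -/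
def IsAlloc {n : ℕ} (x : Finset (Fin n) → ℝ) : Prop :=
  (∀ B, 0 ≤ x B) ∧ (∑ B : Finset (Fin n), x B) = 1

/-- Feasibility for problem (P1): allocation with `r_i(x) > λ_i` for all `i`. -/
def Feasible {n : ℕ} (s : Fin n → Finset (Fin n) → ℝ) (lam : Fin n → ℝ)
    (x : Finset (Fin n) → ℝ) : Prop :=
  IsAlloc x ∧ ∀ i, lam i < serviceRate s x i

/-- Average delay `D(x) = (Σ_j λ_j)⁻¹ Σ_i λ_i / (r_i(x) − λ_i)`. -/
noncomputable def Delay {n : ℕ} (s : Fin n → Finset (Fin n) → ℝ) (lam : Fin n → ℝ)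
    (x : Finset (Fin n) → ℝ) : ℝ :=
  (∑ j, lam j)⁻¹ * ∑ i, lam i / (serviceRate s x i - lam i)

/-- Optimality for problem (P1). -/
def Optimal {n : ℕ} (s : Fin n → Finset (Fin n) → ℝ) (lam : Fin n → ℝ)
    (x : Finset (Fin n) → ℝ) : Prop :=
  Feasible s lam x ∧ ∀ y, Feasible s lam y → Delay s lam x ≤ Delay s lam y

lemma card_le_of_hyperplane {n : ℕ} (hn : 1 ≤ n) (f : (Fin n → ℝ) →ₗ[ℝ] ℝ) (hf : f ≠ 0)
    (u : ℝ) (t : Finset (Fin n → ℝ)) (ht : ∀ y ∈ t, f y = u)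
    (hai : AffineIndependent ℝ ((↑) : t → (Fin n → ℝ))) : t.card ≤ n := by
  rcases Nat.eq_zero_or_pos t.card with h0 | hpos
  · omega
  obtain ⟨k, hk⟩ : ∃ k, t.card = k + 1 := ⟨t.card - 1, by omega⟩
  have hcard : Fintype.card t = k + 1 := by simpa using hk
  have hfr := hai.finrank_vectorSpan hcard
  have hrange : Set.range ((↑) : t → (Fin n → ℝ)) = (t : Set (Fin n → ℝ)) :=
    Subtype.range_coe
  rw [hrange] at hfr
  have hle : vectorSpan ℝ (t : Set (Fin n → ℝ)) ≤ LinearMap.ker f := by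
    rw [vectorSpan_def, Submodule.span_le]
    rintro v ⟨a, ha, b, hb, rfl⟩
    simp only [SetLike.mem_coe, LinearMap.mem_ker, vsub_eq_sub, map_sub]
    rw [ht a ha, ht b hb, sub_self]
  have hker : Module.finrank ℝ (LinearMap.ker f) + 1 = n := by
    have := Module.Dual.finrank_ker_add_one_of_ne_zero hf
    rwa [Module.finrank_fin_fun] at this
  have := Submodule.finrank_mono hle
  omega

lemma exists_min_rate {n : ℕ} (hn : 1 ≤ n) (lam : Fin n → ℝ) (hlam : ∀ i, 0 < lam i)
    (A : Set (Fin n → ℝ)) (hAconv : Convex ℝ A) (hAcomp : IsCompact A)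
    (r₀ : Fin n → ℝ) (hr₀ : r₀ ∈ A ∩ {r | ∀ i, lam i < r i}) :
    ∃ rs ∈ A ∩ {r | ∀ i, lam i < r i},
      ∀ r ∈ A ∩ {r | ∀ i, lam i < r i},
        (∑ j, lam j)⁻¹ * ∑ i, lam i / (rs i - lam i) ≤
        (∑ j, lam j)⁻¹ * ∑ i, lam i / (r i - lam i) := by
  classical
  have hne : (Finset.univ : Finset (Fin n)).Nonempty := by
    simpa [Finset.univ_nonempty_iff] using Fin.pos_iff_nonempty.mp (by omega)
  set D : (Fin n → ℝ) → ℝ := fun r => (∑ j, lam j)⁻¹ * ∑ i, lam i / (r i - lam i) with hD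
  set F : Set (Fin n → ℝ) := A ∩ {r | ∀ i, lam i < r i} with hF
  set K : ℝ := ∑ i, lam i / (r₀ i - lam i) with hK
  have hc : (0:ℝ) < ∑ j, lam j := Finset.sum_pos (fun j _ => hlam j) hne
  have hKpos : 0 < K :=
    Finset.sum_pos (fun i _ => div_pos (hlam i) (sub_pos.mpr (hr₀.2 i))) hne
  -- sum form of D versus K
  have hsumle : ∀ r ∈ F, D r ≤ D r₀ → ∀ i, lam i + lam i / K ≤ r i := by
    intro r hr hDr i
    have hsum : ∑ j, lam j / (r j - lam j) ≤ K := by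
      have := mul_le_mul_of_nonneg_left hDr (le_of_lt hc)
      rw [hD] at this
      simp only [← mul_assoc, mul_inv_cancel₀ (ne_of_gt hc), one_mul] at this
      exact this
    have hterm : lam i / (r i - lam i) ≤ K := by
      refine le_trans ?_ hsum
      exact Finset.single_le_sum
        (fun j _ => le_of_lt (div_pos (hlam j) (sub_pos.mpr (hr.2 j)))) (Finset.mem_univ i)
    have hri : 0 < r i - lam i := sub_pos.mpr (hr.2 i)
    have : lam i / K ≤ r i - lam i := by
      rw [div_le_iff₀ hKpos]
      have := (div_le_iff₀ hri).mp hterm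
      linarith [mul_comm K (r i - lam i)]
    linarith
  set M : Set (Fin n → ℝ) := A ∩ {r | ∀ i, lam i + lam i / K ≤ r i} with hM
  have hMsubF : M ⊆ F := by
    rintro r ⟨hrA, hrb⟩
    exact ⟨hrA, fun i => lt_of_lt_of_le
      (by have := div_pos (hlam i) hKpos; linarith) (hrb i)⟩
  have hMcomp : IsCompact M := by
    refine hAcomp.inter_right ?_
    have : {r : Fin n → ℝ | ∀ i, lam i + lam i / K ≤ r i}
        = ⋂ i, {r : Fin n → ℝ | lam i + lam i / K ≤ r i} := by
      ext r; simp [Set.mem_iInter]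
    rw [this]
    exact isClosed_iInter fun i => isClosed_le continuous_const (continuous_apply i)
  have hr₀M : r₀ ∈ M := ⟨hr₀.1, hsumle r₀ hr₀ (le_refl _) ⟩
  have hDcont : ContinuousOn D M := by
    refine ContinuousOn.mul continuousOn_const ?_
    refine continuousOn_finset_sum _ fun i _ => ?_
    refine ContinuousOn.div continuousOn_const
      (((continuous_apply i).sub continuous_const).continuousOn) ?_
    intro r hr
    have := hr.2 i
    have := div_pos (hlam i) hKpos
    intro h0
    rw [sub_eq_zero] at h0
    have := hr.2 i
    rw [← h0] at this
    linarith
  obtain ⟨rs, hrsM, hrsmin⟩ := hMcomp.exists_isMinOn ⟨r₀, hr₀M⟩ hDcont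
  refine ⟨rs, hMsubF hrsM, ?_⟩
  intro r hr
  rcases le_or_gt (D r) (D r₀) with h | h
  · exact hrsmin ⟨hr.1, hsumle r hr h⟩
  · exact le_of_lt (lt_of_le_of_lt (hrsmin hr₀M) h)

lemma exists_good_alloc {n : ℕ} (hn : 1 ≤ n) (s : Fin n → Finset (Fin n) → ℝ) (lam : Fin n → ℝ)
    (hlam : ∀ i, 0 < lam i)
    (g : Finset (Fin n) → (Fin n → ℝ)) (hgdef : ∀ B i, g B i = s i B)
    (rs : Fin n → ℝ) (hrsA : rs ∈ convexHull ℝ (Set.range g))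
    (hrsF : ∀ i, lam i < rs i)
    (hpareto : ∀ r' ∈ convexHull ℝ (Set.range g), ¬ (∀ i, rs i < r' i)) :
    ∃ x : Finset (Fin n) → ℝ, IsAlloc x ∧ (∀ i, serviceRate s x i = rs i) ∧
      {B : Finset (Fin n) | 0 < x B}.ncard ≤ n := by
  classical
  set A : Set (Fin n → ℝ) := convexHull ℝ (Set.range g) with hA
  set U : Set (Fin n → ℝ) := ⋂ i, {r | rs i < r i} with hU
  have hUopen : IsOpen U := isOpen_iInter_of_finite fun i =>
    isOpen_lt continuous_const (continuous_apply i)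
  have hUconv : Convex ℝ U := convex_iInter fun i =>
    convex_halfSpace_gt ⟨fun a b => rfl, fun c a => rfl⟩ (rs i)
  have hdisj : Disjoint U A := by
    rw [Set.disjoint_left]
    intro r' hr'U hr'A
    exact hpareto r' hr'A (fun i => Set.mem_iInter.mp hr'U i)
  have hAconv : Convex ℝ A := convex_convexHull ℝ _
  obtain ⟨f, u, hfU, hfA⟩ := geometric_hahn_banach_open hUconv hUopen hAconv hdisj
  have hone : f (fun _ => (1:ℝ)) < 0 := by
    have h1 : (rs + fun _ => (1:ℝ)) ∈ U := by
      rw [hU, Set.mem_iInter]; intro i; simp [lt_add_iff_pos_right]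
    have := hfU _ h1
    rw [map_add] at this
    have h2 := hfA rs hrsA
    linarith
  have hfrs : f rs = u := by
    refine le_antisymm ?_ (hfA rs hrsA)
    by_contra hlt
    push_neg at hlt
    set ε : ℝ := (u - f rs) / f (fun _ => (1:ℝ)) with hε
    have hεpos : 0 < ε := div_pos_of_neg_of_neg (by linarith) hone
    have hmem : (rs + ε • fun _ => (1:ℝ)) ∈ U := by
      rw [hU, Set.mem_iInter]; intro i
      simp only [Set.mem_setOf_eq, Pi.add_apply, Pi.smul_apply, smul_eq_mul, mul_one]
      linarith
    have := hfU _ hmem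
    rw [map_add, map_smul, smul_eq_mul, hε,
      div_mul_cancel₀ _ (ne_of_lt hone)] at this
    linarith
  -- weights on the image finset
  set t₀ : Finset (Fin n → ℝ) := Finset.image g Finset.univ with ht₀
  have ht₀A : (t₀ : Set (Fin n → ℝ)) = Set.range g := by
    rw [ht₀, Finset.coe_image, Finset.coe_univ, Set.image_univ]
  have hrs₀ : rs ∈ convexHull ℝ (t₀ : Set (Fin n → ℝ)) := by rw [ht₀A]; exact hrsA
  rw [Finset.convexHull_eq] at hrs₀
  obtain ⟨w, hw0, hw1, hwc⟩ := hrs₀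
  rw [Finset.centerMass_eq_of_sum_1 _ _ hw1] at hwc
  simp only [id] at hwc
  -- positive-weight points lie on the hyperplane
  have hfy : ∀ y ∈ t₀, u ≤ f y := fun y hy =>
    hfA y (by rw [hA, ← ht₀A]; exact subset_convexHull ℝ _ (Finset.mem_coe.mpr hy))
  have hzero : ∀ y ∈ t₀, w y * (f y - u) = 0 := by
    have hsum0 : ∑ y ∈ t₀, w y * (f y - u) = 0 := by
      have hfsum : f (∑ y ∈ t₀, w y • y) = ∑ y ∈ t₀, w y * f y := by
        rw [map_sum]; exact Finset.sum_congr rfl fun y _ => by rw [map_smul, smul_eq_mul]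
      calc ∑ y ∈ t₀, w y * (f y - u)
          = (∑ y ∈ t₀, w y * f y) - u * ∑ y ∈ t₀, w y := by
            rw [Finset.mul_sum, ← Finset.sum_sub_distrib]
            exact Finset.sum_congr rfl fun y _ => by ring
        _ = 0 := by rw [← hfsum, hwc, hfrs, hw1]; ring
    intro y hy
    exact (Finset.sum_eq_zero_iff_of_nonneg fun y hy =>
      mul_nonneg (hw0 y hy) (sub_nonneg.mpr (hfy y hy))).mp hsum0 y hy
  set t₁ : Finset (Fin n → ℝ) := t₀.filter (fun y => w y ≠ 0) with ht₁
  have ht₁f : ∀ y ∈ t₁, f y = u := by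
    intro y hy
    rw [ht₁, Finset.mem_filter] at hy
    have := hzero y hy.1
    rcases mul_eq_zero.mp this with h | h
    · exact absurd h hy.2
    · linarith [sub_eq_zero.mp h]
  have hrs₁ : rs ∈ convexHull ℝ (t₁ : Set (Fin n → ℝ)) := by
    have hsum1 : ∑ y ∈ t₁, w y = 1 := by
      rw [ht₁, Finset.sum_filter_ne_zero, hw1]
    have hc1 : ∑ y ∈ t₁, w y • y = rs := by
      rw [← hwc, ht₁]
      exact Finset.sum_filter_of_ne fun y hy h => by
        intro h0; rw [h0, zero_smul] at h; exact h rfl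
    rw [← hc1, ← Finset.centerMass_eq_of_sum_1 _ _ hsum1]
    exact Finset.centerMass_mem_convexHull _
      (fun y hy => hw0 y (Finset.mem_filter.mp hy).1) (by rw [hsum1]; norm_num)
      (fun y hy => Finset.mem_coe.mpr hy)
  -- Caratheodory
  rw [convexHull_eq_union] at hrs₁
  simp only [Set.mem_iUnion, exists_prop] at hrs₁
  obtain ⟨t, htsub, hai, hrt⟩ := hrs₁
  have htcard : t.card ≤ n := by
    refine card_le_of_hyperplane hn f.toLinearMap ?_ u t
      (fun y hy => ht₁f y (htsub hy)) hai
    intro h0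
    have : f (fun _ => (1:ℝ)) = 0 := by
      have := congrArg (fun φ => φ (fun _ => (1:ℝ))) h0
      simpa using this
    linarith
  -- weights on t
  rw [Finset.convexHull_eq] at hrt
  obtain ⟨w', hw'0, hw'1, hw'c⟩ := hrt
  rw [Finset.centerMass_eq_of_sum_1 _ _ hw'1] at hw'c
  simp only [id] at hw'c
  have htrange : ∀ y ∈ t, ∃ B, g B = y := by
    intro y hy
    have : y ∈ (t₀ : Set (Fin n → ℝ)) := (Finset.filter_subset _ _) (htsub hy)
    rw [ht₀A] at this
    exact this
  set pick : (Fin n → ℝ) → Finset (Fin n) :=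
    fun y => if h : ∃ B, g B = y then h.choose else ∅ with hpick
  have hpick_spec : ∀ y ∈ t, g (pick y) = y := by
    intro y hy
    rw [hpick]
    simp only [dif_pos (htrange y hy)]
    exact (htrange y hy).choose_spec
  set x : Finset (Fin n) → ℝ :=
    fun B => ∑ y ∈ t, if pick y = B then w' y else 0 with hx
  have hxnn : ∀ B, 0 ≤ x B := fun B =>
    Finset.sum_nonneg fun y hy => by
      split <;> [exact hw'0 y hy; exact le_refl 0]
  have hxsum : ∑ B : Finset (Fin n), x B = 1 := by
    rw [hx]
    rw [Finset.sum_comm]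
    calc ∑ y ∈ t, ∑ B : Finset (Fin n), (if pick y = B then w' y else 0)
        = ∑ y ∈ t, w' y := Finset.sum_congr rfl fun y _ => by
          rw [Finset.sum_ite_eq]; simp
      _ = 1 := hw'1
  have hxrate : ∀ i, serviceRate s x i = rs i := by
    intro i
    rw [serviceRate, hx]
    calc ∑ B : Finset (Fin n), s i B * ∑ y ∈ t, (if pick y = B then w' y else 0)
        = ∑ B : Finset (Fin n), ∑ y ∈ t, (if pick y = B then s i B * w' y else 0) := by
          refine Finset.sum_congr rfl fun B _ => ?_
          rw [Finset.mul_sum]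
          exact Finset.sum_congr rfl fun y _ => by split <;> simp
      _ = ∑ y ∈ t, ∑ B : Finset (Fin n), (if pick y = B then s i B * w' y else 0) :=
          Finset.sum_comm
      _ = ∑ y ∈ t, s i (pick y) * w' y := Finset.sum_congr rfl fun y _ => by
          rw [Finset.sum_ite_eq]; simp
      _ = ∑ y ∈ t, w' y * y i := Finset.sum_congr rfl fun y hy => by
          rw [← hgdef, hpick_spec y hy, mul_comm]
      _ = rs i := by
          rw [← hw'c]
          simp [Finset.sum_apply]
  refine ⟨x, ⟨hxnn, hxsum⟩, hxrate, ?_⟩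
  have hsupp : {B : Finset (Fin n) | 0 < x B} ⊆ ↑(t.image pick) := by
    intro B hB
    simp only [Set.mem_setOf_eq, hx] at hB
    by_contra hBim
    have : ∀ y ∈ t, (if pick y = B then w' y else 0) = 0 := by
      intro y hy
      split
      · next h => exact absurd (Finset.mem_coe.mpr (Finset.mem_image.mpr ⟨y, hy, h⟩)) hBim
      · rfl
    rw [Finset.sum_eq_zero this] at hB
    exact lt_irrefl 0 hB
  calc {B : Finset (Fin n) | 0 < x B}.ncard
      ≤ (↑(t.image pick) : Set (Finset (Fin n))).ncard :=
        Set.ncard_le_ncard hsupp (Set.toFinite _)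
    _ = (t.image pick).card := Set.ncard_coe_finset _
    _ ≤ t.card := Finset.card_image_le
    _ ≤ n := htcard

/-- if (P1) is feasible, some optimal allocation has at most `n`
active reuse patterns. -/
theorem conservative_optimal_at_most_n_patterns {n : ℕ} (hn : 1 ≤ n)
    (s : Fin n → Finset (Fin n) → ℝ)
    (hs_nonneg : ∀ i B, 0 ≤ s i B)
    (hs_zero : ∀ (i : Fin n) (B : Finset (Fin n)), i ∉ B → s i B = 0)
    (lam : Fin n → ℝ) (hlam : ∀ i, 0 < lam i)
    (hfeas : ∃ x, Feasible s lam x) :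
    ∃ x : Finset (Fin n) → ℝ, Optimal s lam x ∧
      {B : Finset (Fin n) | 0 < x B}.ncard ≤ n := by
  classical
  obtain ⟨x₀, hx₀⟩ := hfeas
  set g : Finset (Fin n) → (Fin n → ℝ) := fun B i => s i B with hg
  have hgdef : ∀ B i, g B i = s i B := fun B i => rfl
  set A : Set (Fin n → ℝ) := convexHull ℝ (Set.range g) with hA
  have hAconv : Convex ℝ A := convex_convexHull ℝ _
  have hAcomp : IsCompact A := (Set.finite_range g).isCompact_convexHull (𝕜 := ℝ)
  -- rate vectors of allocations lie in A
  have hrv : ∀ x : Finset (Fin n) → ℝ, IsAlloc x →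
      (fun i => serviceRate s x i) ∈ A := by
    intro x hx
    have hsum : (fun i => serviceRate s x i) = ∑ B : Finset (Fin n), x B • g B := by
      funext i
      simp only [serviceRate, Finset.sum_apply, Pi.smul_apply, smul_eq_mul]
      exact Finset.sum_congr rfl fun B _ => mul_comm _ _
    rw [hA, hsum, ← Finset.centerMass_eq_of_sum_1 _ g hx.2]
    exact Finset.centerMass_mem_convexHull _ (fun B _ => hx.1 B) (by rw [hx.2]; norm_num)
      (fun B _ => Set.mem_range_self B)
  have hr₀ : (fun i => serviceRate s x₀ i) ∈ A ∩ {r | ∀ i, lam i < r i} :=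
    ⟨hrv x₀ hx₀.1, fun i => hx₀.2 i⟩
  obtain ⟨rs, hrsF, hmin⟩ := exists_min_rate hn lam hlam A hAconv hAcomp _ hr₀
  have hc : (0:ℝ) < ∑ j, lam j :=
    Finset.sum_pos (fun j _ => hlam j)
      (by simpa [Finset.univ_nonempty_iff] using Fin.pos_iff_nonempty.mp (by omega))
  have hne : (Finset.univ : Finset (Fin n)).Nonempty := by
    simpa [Finset.univ_nonempty_iff] using Fin.pos_iff_nonempty.mp (by omega)
  -- Pareto optimality of rs
  have hpareto : ∀ r' ∈ A, ¬ (∀ i, rs i < r' i) := by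
    intro r' hr'A hdom
    have hr'F : r' ∈ A ∩ {r | ∀ i, lam i < r i} :=
      ⟨hr'A, fun i => lt_trans (hrsF.2 i) (hdom i)⟩
    have hlt : (∑ j, lam j)⁻¹ * ∑ i, lam i / (r' i - lam i) <
        (∑ j, lam j)⁻¹ * ∑ i, lam i / (rs i - lam i) := by
      refine mul_lt_mul_of_pos_left ?_ (inv_pos.mpr hc)
      refine Finset.sum_lt_sum_of_nonempty hne fun i _ => ?_
      exact div_lt_div_of_pos_left (hlam i) (sub_pos.mpr (hrsF.2 i))
        (by have := hdom i; linarith)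
    exact absurd (hmin r' hr'F) (not_le.mpr hlt)
  obtain ⟨x, hxalloc, hxrate, hxcard⟩ :=
    exists_good_alloc hn s lam hlam g hgdef rs hrsF.1 hrsF.2 hpareto
  have hxfeas : Feasible s lam x := ⟨hxalloc, fun i => by rw [hxrate i]; exact hrsF.2 i⟩
  refine ⟨x, ⟨hxfeas, ?_⟩, hxcard⟩
  intro y hy
  have hyF : (fun i => serviceRate s y i) ∈ A ∩ {r | ∀ i, lam i < r i} :=
    ⟨hrv y hy.1, fun i => hy.2 i⟩
  have := hmin _ hyF
  simpa [Delay, hxrate] using this
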